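/- For every M < ∞, P(‖X₁(x)‖ ≤ M) → 0 as ‖x‖ → ∞; that is, for every M < ∞ and ε > 0 there exists R < ∞ such that ‖x‖ > R implies P(‖X₁(x)‖ ≤ M) ≤ ε. -/

import Mathlib

open MeasureTheory Finset

/-- The Euclidean norm on `ℝ^k` (realized as `Fin k → ℝ`). -/
noncomputable def euclNorm {k : ℕ} (x : Fin k → ℝ) : ℝ := Real.sqrt (∑ i, x i ^ 2)

lemma abs_apply_le_euclNorm {k : ℕ} (x : Fin k → ℝ) (i : Fin k) : |x i| ≤ euclNorm x := by
  rw [← Real.sqrt_sq_eq_abs]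
  exact Real.sqrt_le_sqrt (Finset.single_le_sum (fun j _ => sq_nonneg (x j)) (Finset.mem_univ i))

lemma euclNorm_smul {k : ℕ} (c : ℝ) (hc : 0 ≤ c) (x : Fin k → ℝ) :
    euclNorm (c • x) = c * euclNorm x := by
  unfold euclNorm
  simp only [Pi.smul_apply, smul_eq_mul, mul_pow]
  rw [← Finset.mul_sum, Real.sqrt_mul (by positivity), Real.sqrt_sq hc]

lemma key_bound {Ω : Type*} [MeasurableSpace Ω] (μ : Measure Ω)
    (e : Ω → ℝ) (he : Measurable e) (f : ℝ → ℝ) (hf0 : ∀ u, 0 ≤ f u)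
    (hlaw : μ.map e = volume.withDensity (fun u => ENNReal.ofReal (f u)))
    (L₀ : ℝ) (hL₀ : ∀ u, (1 + |u|) * f u ≤ L₀)
    (A B M' : ℝ) (hB : 0 < B) :
    μ {ω | |A + B * e ω| ≤ M'} ≤
      ENNReal.ofReal (2 * M' * L₀ / (B + max (|A| - M') 0)) := by
  have hL₀0 : 0 ≤ L₀ := le_trans (by nlinarith [hf0 0, abs_nonneg (0:ℝ)]) (hL₀ 0)
  set Q := B + max (|A| - M') 0 with hQdef
  have hQpos : 0 < Q := by
    have := le_max_right (|A| - M') 0; simp only [hQdef]; linarith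
  set l := (-M' - A) / B with hl
  set r := (M' - A) / B with hr
  have hS : {u : ℝ | |A + B * u| ≤ M'} = Set.Icc l r := by
    ext u
    simp only [Set.mem_setOf_eq, Set.mem_Icc, abs_le, hl, hr, div_le_iff₀ hB, le_div_iff₀ hB]
    constructor <;> intro h <;> constructor <;> nlinarith [h.1, h.2]
  have hpre : {ω | |A + B * e ω| ≤ M'} = e ⁻¹' Set.Icc l r := by
    ext ω; rw [Set.mem_preimage, ← hS]; rfl
  rw [hpre, ← Measure.map_apply he measurableSet_Icc, hlaw,
    withDensity_apply _ measurableSet_Icc]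
  have hC : ∀ u ∈ Set.Icc l r, ENNReal.ofReal (f u) ≤ ENNReal.ofReal (L₀ * B / Q) := by
    intro u hu
    apply ENNReal.ofReal_le_ofReal
    have hub : |A + B * u| ≤ M' := (Set.ext_iff.mp hS u).mpr hu
    have h2 : |A| ≤ M' + B * |u| := by
      have h3 : |A| ≤ |A + B * u| + |B * u| := by
        have := abs_add_le (A + B * u) (-(B * u)); simpa using this
      rw [abs_mul, abs_of_pos hB] at h3
      linarith
    have hQle : Q ≤ B * (1 + |u|) := by
      have h4 : max (|A| - M') 0 ≤ B * |u| := max_le (by linarith) (by positivity)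
      simp only [hQdef]; nlinarith
    rw [le_div_iff₀ hQpos]
    calc f u * Q ≤ f u * (B * (1 + |u|)) := mul_le_mul_of_nonneg_left hQle (hf0 u)
      _ = B * ((1 + |u|) * f u) := by ring
      _ ≤ B * L₀ := mul_le_mul_of_nonneg_left (hL₀ u) hB.le
      _ = L₀ * B := mul_comm _ _
  calc ∫⁻ u in Set.Icc l r, ENNReal.ofReal (f u) ∂volume
      ≤ ∫⁻ _ in Set.Icc l r, ENNReal.ofReal (L₀ * B / Q) ∂volume :=
        setLIntegral_mono measurable_const hC
    _ = ENNReal.ofReal (L₀ * B / Q) * volume (Set.Icc l r) := setLIntegral_const _ _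
    _ = ENNReal.ofReal (L₀ * B / Q) * ENNReal.ofReal (r - l) := by rw [Real.volume_Icc]
    _ = ENNReal.ofReal ((L₀ * B / Q) * (r - l)) := (ENNReal.ofReal_mul (by positivity)).symm
    _ = ENNReal.ofReal (2 * M' * L₀ / Q) := by
        congr 1
        have hrl : r - l = 2 * M' / B := by
          rw [hr, hl]; field_simp; ring
        rw [hrl]; field_simp

/-- **Statement 13.** Let `a, b : ℝ^p → ℝ` (`p = n+1`) be Borel, `b > 0`, with
`max(|a(x)|,b(x)) = O(1+‖x‖)`, `inf_{‖x‖≤M} b(x)/(1+‖x‖) > 0` for all `M`, and suppose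
there are positively 1-homogeneous Borel `a*, b*` with `b* ≥ 0`,
`inf_{‖θ‖=1} max(|a*(θ)|,b*(θ)) > 0` and `a − a* = o(‖x‖)`, `b − b* = o(‖x‖)`.  Let `e`
have a density `f` with `sup_u (1+|u|)f(u) < ∞` and `E(|e|^{r₀}) < ∞`.  With
`X₁(x) = (a(x)+b(x)e, x₁,…,x_{p−1})`: for every `M < ∞` and `ε > 0` there exists
`R < ∞` such that `‖x‖ > R` implies `P(‖X₁(x)‖ ≤ M) ≤ ε`. -/
theorem stmt14 {Ω : Type*} [MeasurableSpace Ω] (μ : Measure Ω) [IsProbabilityMeasure μ]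
    (n : ℕ) (e : Ω → ℝ) (he : Measurable e)
    (f : ℝ → ℝ) (hf0 : ∀ u, 0 ≤ f u) (hfm : Measurable f)
    (hlaw : μ.map e = volume.withDensity (fun u => ENNReal.ofReal (f u)))
    (L₀ : ℝ) (hL₀ : ∀ u, (1 + |u|) * f u ≤ L₀)
    (r₀ : ℝ) (hr₀ : 0 < r₀) (hmom : Integrable (fun ω => |e ω| ^ r₀) μ)
    (a b astar bstar : (Fin (n + 1) → ℝ) → ℝ)
    (ham : Measurable a) (hbm : Measurable b)
    (hasm : Measurable astar) (hbsm : Measurable bstar)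
    (hbpos : ∀ x, 0 < b x)
    (hgrow : ∃ K : ℝ, ∀ x, max |a x| (b x) ≤ K * (1 + euclNorm x))
    (hbinf : ∀ M : ℝ, ∃ c : ℝ, 0 < c ∧ ∀ x, euclNorm x ≤ M → c * (1 + euclNorm x) ≤ b x)
    (hah : ∀ c : ℝ, 0 < c → ∀ x, astar (c • x) = c * astar x)
    (hbh : ∀ c : ℝ, 0 < c → ∀ x, bstar (c • x) = c * bstar x)
    (hbs0 : ∀ x, 0 ≤ bstar x)
    (hL₁ : ∃ L₁ : ℝ, 0 < L₁ ∧ ∀ x, euclNorm x = 1 → L₁ ≤ max |astar x| (bstar x))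
    (hao : ∀ ε : ℝ, 0 < ε → ∃ M : ℝ, ∀ x, M < euclNorm x → |a x - astar x| ≤ ε * euclNorm x)
    (hbo : ∀ ε : ℝ, 0 < ε → ∃ M : ℝ, ∀ x, M < euclNorm x → |b x - bstar x| ≤ ε * euclNorm x) :
    ∀ M : ℝ, ∀ ε : ℝ, 0 < ε →
      ∃ R : ℝ, ∀ x : Fin (n + 1) → ℝ, R < euclNorm x →
        μ {ω | euclNorm (Fin.cons (a x + b x * e ω)
            (fun j : Fin n => x j.castSucc) : Fin (n + 1) → ℝ) ≤ M}
          ≤ ENNReal.ofReal ε := by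
  intro M ε hε
  have hL₀0 : 0 ≤ L₀ := le_trans (by nlinarith [hf0 0, abs_nonneg (0:ℝ)]) (hL₀ 0)
  obtain ⟨L₁, hL₁pos, hL₁⟩ := hL₁
  obtain ⟨Ma, hMa⟩ := hao (L₁ / 4) (by positivity)
  obtain ⟨Mb, hMb⟩ := hbo (L₁ / 4) (by positivity)
  set M' := max M 1 with hM'def
  have hM'le : M ≤ M' := le_max_left M 1
  have hM'pos : (0:ℝ) < M' := lt_of_lt_of_le one_pos (le_max_right M 1)
  set D := M' + 2 * M' * L₀ / ε with hDdef
  have hDpos : 0 < D := by positivity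
  clear_value M'
  refine ⟨max (max Ma Mb) (D * 4 / (3 * L₁)), fun x hx => ?_⟩
  set t := euclNorm x with ht
  clear_value D
  have htpos : 0 < t := lt_of_le_of_lt (le_trans (by positivity) (le_max_right _ _)) hx
  have hxa : Ma < t := lt_of_le_of_lt (le_trans (le_max_left _ _) (le_max_left _ _)) hx
  have hxb : Mb < t := lt_of_le_of_lt (le_trans (le_max_right _ _) (le_max_left _ _)) hx
  have hxD : D * 4 / (3 * L₁) < t := lt_of_le_of_lt (le_max_right _ _) hx
  -- homogeneity: max |astar x| (bstar x) ≥ L₁ * t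
  have hθ : euclNorm (t⁻¹ • x) = 1 := by
    rw [euclNorm_smul t⁻¹ (by positivity) x, ← ht, inv_mul_cancel₀ htpos.ne']
  have hstar : L₁ * t ≤ max |astar x| (bstar x) := by
    have h1 := hL₁ (t⁻¹ • x) hθ
    rw [hah t⁻¹ (by positivity) x, hbh t⁻¹ (by positivity) x] at h1
    have h2 : max |t⁻¹ * astar x| (t⁻¹ * bstar x) = t⁻¹ * max |astar x| (bstar x) := by
      rw [abs_mul, abs_of_pos (by positivity : (0:ℝ) < t⁻¹)]
      exact (mul_max_of_nonneg _ _ (by positivity)).symm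
    rw [h2] at h1
    rw [← mul_le_mul_iff_right₀ (by positivity : (0:ℝ) < t⁻¹)]
    calc t⁻¹ * (L₁ * t) = L₁ := by field_simp
      _ ≤ t⁻¹ * max |astar x| (bstar x) := h1
  -- deviations
  have hadev : |a x - astar x| ≤ L₁ / 4 * t := hMa x hxa
  have hbdev : |b x - bstar x| ≤ L₁ / 4 * t := hMb x hxb
  have hmax34 : 3 / 4 * L₁ * t ≤ max |a x| (b x) := by
    rcases le_total (bstar x) |astar x| with hc | hc
    · have h5 : |astar x| - |a x| ≤ |a x - astar x| := by
        have := abs_sub_abs_le_abs_sub (astar x) (a x)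
        rw [abs_sub_comm] at this; linarith
      have has : L₁ * t ≤ |astar x| := by rw [max_eq_left hc] at hstar; exact hstar
      have : 3 / 4 * L₁ * t ≤ |a x| := by linarith
      exact le_trans this (le_max_left _ _)
    · have h5 : bstar x - b x ≤ |b x - bstar x| := by
        have := abs_sub_comm (b x) (bstar x); rw [this]; exact le_abs_self _
      have hbs : L₁ * t ≤ bstar x := le_trans hstar (by rw [max_eq_right hc])
      have : 3 / 4 * L₁ * t ≤ b x := by nlinarith
      exact le_trans this (le_max_right _ _)
  -- the event is contained in {|a x + b x * e ω| ≤ M'}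
  set A := a x with hA
  set B := b x with hB
  have hBpos : 0 < B := hbpos x
  clear_value A B
  have hsub : {ω | euclNorm (Fin.cons (A + B * e ω)
      (fun j : Fin n => x j.castSucc) : Fin (n + 1) → ℝ) ≤ M}
      ⊆ {ω | |A + B * e ω| ≤ M'} := by
    intro ω hω
    simp only [Set.mem_setOf_eq] at hω ⊢
    have h6 := abs_apply_le_euclNorm
      (Fin.cons (A + B * e ω) (fun j : Fin n => x j.castSucc) : Fin (n + 1) → ℝ) 0
    rw [Fin.cons_zero] at h6
    exact le_trans (le_trans h6 hω) hM'le
  set Q := B + max (|A| - M') 0 with hQdef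
  have hQpos : 0 < Q := by
    have := le_max_right (|A| - M') 0; simp only [hQdef]; linarith
  have hQbig : 2 * M' * L₀ / ε ≤ Q := by
    have hQ1 : |A| - M' ≤ Q := by
      have := le_max_left (|A| - M') 0; simp only [hQdef]; linarith
    have hQ2 : B - M' ≤ Q := by
      have := le_max_right (|A| - M') 0; simp only [hQdef]; linarith
    have hmaxQ : max |A| B - M' ≤ Q := by
      rcases max_cases |A| B with ⟨h, _⟩ | ⟨h, _⟩ <;> rw [h] <;> [exact hQ1; exact hQ2]
    have hDt : D < 3 / 4 * L₁ * t := by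
      rw [div_lt_iff₀ (by positivity : (0:ℝ) < 3 * L₁)] at hxD
      nlinarith
    simp only [hDdef] at hDt
    linarith [hmax34, hmaxQ]
  calc μ {ω | euclNorm (Fin.cons (A + B * e ω)
        (fun j : Fin n => x j.castSucc) : Fin (n + 1) → ℝ) ≤ M}
      ≤ μ {ω | |A + B * e ω| ≤ M'} := measure_mono hsub
    _ ≤ ENNReal.ofReal (2 * M' * L₀ / Q) :=
        key_bound μ e he f hf0 hlaw L₀ hL₀ A B M' hBpos
    _ ≤ ENNReal.ofReal ε := by
        apply ENNReal.ofReal_le_ofReal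
        rw [div_le_iff₀ hQpos]
        have h7 : 2 * M' * L₀ ≤ Q * ε := by
          rw [div_le_iff₀ hε] at hQbig; linarith
        linarith
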